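/- (Erdős, multiplicative Erdős–Turán theorem) Let A be a set of positive integers and for each positive integer n let g(n) be the number of representations of n as a product n = a·a' with a, a' ∈ A and a ≤ a'. If there exists n₀ such that g(n) ≥ 1 for all n > n₀, then the function g is unbounded, i.e., limsup_{n→∞} g(n) = ∞. -/

import Mathlib

open Pointwise Filter

/-- The counting function of a set of nonnegative integers: the number of
positive elements of `A` that are at most `n`. -/
noncomputable def countingFn (A : Set ℕ) (n : ℕ) : ℕ := (A ∩ Set.Icc 1 n).ncard

/-- The Shnirel'man density `σ(A) = inf_{n ≥ 1} A(n)/n`. -/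
noncomputable def shnirelmanDensity (A : Set ℕ) : ℝ :=
  ⨅ n : {n : ℕ // 0 < n}, (countingFn A (n : ℕ) : ℝ) / ((n : ℕ) : ℝ)

/-- The lower asymptotic density `d_L(A) = liminf_{n → ∞} A(n)/n`. -/
noncomputable def lowerDensity (A : Set ℕ) : ℝ :=
  liminf (fun n : ℕ => (countingFn A n : ℝ) / (n : ℝ)) atTop

/-- `A` is an additive basis of order `h`: every nonnegative integer is the
sum of exactly `h` elements of `A` (with repetitions allowed). -/
def IsBasisOfOrder (A : Set ℕ) (h : ℕ) : Prop :=
  ∀ n : ℕ, ∃ c : Fin h → ℕ, (∀ i, c i ∈ A) ∧ ∑ i, c i = n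

/-- `A` is an asymptotic basis of order `h`: every sufficiently large integer
is the sum of exactly `h` elements of `A` (with repetitions allowed). -/
def IsAsymptoticBasisOfOrder (A : Set ℕ) (h : ℕ) : Prop :=
  ∀ᶠ n : ℕ in atTop, ∃ c : Fin h → ℕ, (∀ i, c i ∈ A) ∧ ∑ i, c i = n

/-- A minimal asymptotic basis of order `h` is an asymptotic basis of order `h`
no proper subset of which is an asymptotic basis of order `h`. -/
def IsMinimalAsymptoticBasisOfOrder (A : Set ℕ) (h : ℕ) : Prop :=
  IsAsymptoticBasisOfOrder A h ∧
    ∀ B : Set ℕ, B ⊂ A → ¬ IsAsymptoticBasisOfOrder B h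

/-- A maximal asymptotic nonbasis of order `h` is a set that is not an
asymptotic basis of order `h`, but such that adjoining any element outside it
produces an asymptotic basis of order `h`. -/
def IsMaximalAsymptoticNonbasisOfOrder (A : Set ℕ) (h : ℕ) : Prop :=
  ¬ IsAsymptoticBasisOfOrder A h ∧
    ∀ b : ℕ, b ∉ A → IsAsymptoticBasisOfOrder (A ∪ {b}) h


lemma inf_ramsey : ∀ (k : ℕ) (H : Finset ℕ → Prop) (R : Set ℕ), R.Infinite →
    ∃ R' : Set ℕ, R' ⊆ R ∧ R'.Infinite ∧ ∃ c : Bool, ∀ s : Finset ℕ,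
      ↑s ⊆ R' → s.card = k → (H s ↔ c = true) := by
  intro k
  induction k with
  | zero =>
    intro H R hR
    classical
    refine ⟨R, subset_rfl, hR, if H ∅ then true else false, ?_⟩
    intro s _ hcard
    rw [Finset.card_eq_zero] at hcard
    subst hcard
    by_cases h : H ∅ <;> simp [h]
  | succ k ih =>
    intro H R hR
    have key : ∀ S : Set ℕ, S.Infinite → ∃ S' : Set ℕ, S' ⊆ S \ {sInf S} ∧ S'.Infinite ∧
        ∃ c : Bool, ∀ s : Finset ℕ, ↑s ⊆ S' → s.card = k →
          (H (insert (sInf S) s) ↔ c = true) := by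
      intro S hS
      exact ih (fun s => H (insert (sInf S) s)) (S \ {sInf S}) (hS.diff (Set.finite_singleton _))
    classical
    -- step function
    let step : Set ℕ → Set ℕ := fun S => if h : S.Infinite then (key S h).choose else ∅
    let F : ℕ → Set ℕ := fun n => step^[n] R
    have hF0 : F 0 = R := rfl
    have hFsucc : ∀ n, F (n + 1) = step (F n) := by
      intro n; simp only [F, Function.iterate_succ_apply']
    have hFinf : ∀ n, (F n).Infinite := by
      intro n; induction n with
      | zero => exact hR
      | succ n ihn =>
        rw [hFsucc]
        simp only [step, dif_pos ihn]
        exact (key (F n) ihn).choose_spec.2.1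
    have hFsub : ∀ n, F (n + 1) ⊆ F n \ {sInf (F n)} := by
      intro n
      rw [hFsucc]
      simp only [step, dif_pos (hFinf n)]
      exact (key (F n) (hFinf n)).choose_spec.1
    have hFcolor : ∀ n, ∃ c : Bool, ∀ s : Finset ℕ, ↑s ⊆ F (n+1) → s.card = k →
        (H (insert (sInf (F n)) s) ↔ c = true) := by
      intro n
      rw [hFsucc]
      simp only [step, dif_pos (hFinf n)]
      exact (key (F n) (hFinf n)).choose_spec.2.2
    choose c hc using hFcolor
    set a : ℕ → ℕ := fun n => sInf (F n) with ha
    have haF : ∀ n, a n ∈ F n := fun n => Nat.sInf_mem (hFinf n).nonempty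
    have hchain : ∀ n m, n ≤ m → F m ⊆ F n := by
      intro n m hnm
      induction m with
      | zero =>
        have h0 : n = 0 := Nat.le_zero.mp hnm
        subst h0; exact subset_rfl
      | succ m ihm =>
        rcases Nat.lt_or_ge n (m+1) with h | h
        · exact ((hFsub m).trans Set.diff_subset).trans (ihm (by omega))
        · have : n = m + 1 := by omega
          subst this; exact subset_rfl
    have hamono : StrictMono a := by
      have h1 : ∀ n m, n < m → a n < a m := by
        intro n m hnm
        have h2 : a m ∈ F (n+1) := hchain (n+1) m hnm (haF m)
        have h3 := hFsub n h2
        have h4 : a m ∈ F n := h3.1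
        have h5 : a m ≠ a n := by simpa using h3.2
        have h6 : a n ≤ a m := Nat.sInf_le h4
        exact lt_of_le_of_ne h6 (Ne.symm h5)
      intro n m hnm; exact h1 n m hnm
    -- pigeonhole on colors
    have hcol : ∃ c₀ : Bool, {n : ℕ | c n = c₀}.Infinite := by
      by_cases h : {n : ℕ | c n = true}.Infinite
      · exact ⟨true, h⟩
      · refine ⟨false, ?_⟩
        rw [Set.not_infinite] at h
        have := h.infinite_compl
        convert this using 1
        ext n; simp [Set.mem_compl_iff]
      
    obtain ⟨c₀, hB⟩ := hcol
    refine ⟨a '' {n | c n = c₀}, ?_, hB.image (hamono.injective.injOn), c₀, ?_⟩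
    · rintro x ⟨n, _, rfl⟩
      exact hchain 0 n (Nat.zero_le n) (haF n)
    · intro s hs hcard
      have hne : s.Nonempty := by rw [← Finset.card_pos, hcard]; omega
      set x := s.min' hne with hx
      have hxs : x ∈ s := s.min'_mem hne
      obtain ⟨i, hi, hax⟩ := hs hxs
      have herase : ↑(s.erase x) ⊆ F (i + 1) := by
        intro y hy
        rw [Finset.coe_erase] at hy
        obtain ⟨hys, hyx⟩ := hy
        obtain ⟨j, hj, haj⟩ := hs hys
        have hxy : x ≤ y := s.min'_le y hys
        have hij : i < j := by
          rw [← hamono.lt_iff_lt]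
          rw [hax, haj]
          have : x ≠ y := fun h => hyx (by simp [h])
          omega
        exact hchain (i+1) j hij (haj ▸ haF j)
      have hkcard : (s.erase x).card = k := by
        rw [Finset.card_erase_of_mem hxs, hcard]
        omega
      have := hc i (s.erase x) herase hkcard
      have hax' : sInf (F i) = x := hax
      rw [hax', Finset.insert_erase hxs] at this
      have hi' : c i = c₀ := hi
      rw [this, hi']


lemma split_of_prod : ∀ (s : Finset ℕ), (∀ p ∈ s, Nat.Prime p) → ∀ a b : ℕ,
    a * b = ∏ p ∈ s, p → ∃ t, t ⊆ s ∧ a = ∏ p ∈ t, p ∧ b = ∏ p ∈ s \ t, p := by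
  intro s
  induction s using Finset.induction_on with
  | empty =>
    intro _ a b h
    simp only [Finset.prod_empty] at h
    have ha := Nat.eq_one_of_mul_eq_one_right h
    have hb := Nat.eq_one_of_mul_eq_one_left h
    exact ⟨∅, subset_rfl, by simp [ha], by simp [hb]⟩
  | insert p s' hx ih =>
    intro hprime a b h
    have hp : Nat.Prime p := hprime p (Finset.mem_insert_self p s')
    have hprime' : ∀ q ∈ s', Nat.Prime q := fun q hq => hprime q (Finset.mem_insert_of_mem hq)
    rw [Finset.prod_insert hx] at h
    have hdvd : p ∣ a * b := h ▸ Dvd.intro _ rfl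
    rcases (Nat.Prime.dvd_mul hp).mp hdvd with hpa | hpb
    · obtain ⟨a', rfl⟩ := hpa
      have hcancel : a' * b = ∏ q ∈ s', q := by
        have hp0 : p ≠ 0 := hp.pos.ne'
        have : p * (a' * b) = p * ∏ q ∈ s', q := by ring_nf; ring_nf at h; linarith [h]
        exact Nat.eq_of_mul_eq_mul_left hp.pos this
      obtain ⟨t, hts, hat, hbt⟩ := ih hprime' a' b hcancel
      have hpt : p ∉ t := fun hpt => hx (hts hpt)
      refine ⟨insert p t, Finset.insert_subset_insert p hts, ?_, ?_⟩
      · rw [Finset.prod_insert hpt, hat]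
      · have : insert p s' \ insert p t = s' \ t := by
          ext y
          simp only [Finset.mem_sdiff, Finset.mem_insert]
          constructor
          · rintro ⟨hy1 | hy1, hy2⟩
            · exact absurd (Or.inl hy1) hy2
            · exact ⟨hy1, fun hyt => hy2 (Or.inr hyt)⟩
          · rintro ⟨hy1, hy2⟩
            refine ⟨Or.inr hy1, ?_⟩
            rintro (rfl | hyt)
            · exact hx hy1
            · exact hy2 hyt
        rw [this, hbt]
    · obtain ⟨b', rfl⟩ := hpb
      have hcancel : a * b' = ∏ q ∈ s', q := by
        have : p * (a * b') = p * ∏ q ∈ s', q := by ring_nf; ring_nf at h; linarith [h]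
        exact Nat.eq_of_mul_eq_mul_left hp.pos this
      obtain ⟨t, hts, hat, hbt⟩ := ih hprime' a b' hcancel
      have hpt : p ∉ s' \ t := fun hmem => hx (Finset.mem_sdiff.mp hmem).1
      refine ⟨t, hts.trans (Finset.subset_insert p s'), hat, ?_⟩
      have hpt' : p ∉ t := fun h' => hx (hts h')
      rw [Finset.insert_sdiff_of_notMem _ hpt', Finset.prod_insert hpt, hbt]

lemma prod_primes_injective {t u : Finset ℕ} (ht : ∀ p ∈ t, Nat.Prime p)
    (hu : ∀ p ∈ u, Nat.Prime p) (h : ∏ p ∈ t, p = ∏ p ∈ u, p) : t = u := by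
  have key : ∀ (t u : Finset ℕ), (∀ p ∈ t, Nat.Prime p) → (∀ p ∈ u, Nat.Prime p) →
      ∏ p ∈ t, p = ∏ p ∈ u, p → t ⊆ u := by
    intro t u ht hu h q hq
    have hqp : Nat.Prime q := ht q hq
    have : q ∣ ∏ p ∈ u, p := h ▸ Finset.dvd_prod_of_mem _ hq
    obtain ⟨r, hr, hqr⟩ := (Nat.Prime.prime hqp).exists_mem_finset_dvd this
    have : q = r := ((Nat.prime_dvd_prime_iff_eq hqp (hu r hr)).mp hqr)
    exact this ▸ hr
  exact Finset.Subset.antisymm (key t u ht hu h) (key u t hu ht h.symm)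

lemma le_choose_of_le_half {n r : ℕ} (h1 : 1 ≤ r) (h2 : r ≤ n / 2) : n ≤ n.choose r := by
  induction r with
  | zero => omega
  | succ r ihr =>
    rcases Nat.eq_or_lt_of_le h1 with h | h
    · rw [← h, Nat.choose_one_right]
    · have hr1 : 1 ≤ r := by omega
      have := ihr hr1 (by omega)
      calc n ≤ n.choose r := this
        _ ≤ n.choose (r + 1) := Nat.choose_le_succ_of_lt_half_left (by omega)

theorem erdos_multiplicative_erdos_turan (A : Set ℕ)
    (hA : ∀ a ∈ A, 0 < a) (g : ℕ → ℕ)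
    (hg : ∀ n : ℕ, g n =
      Nat.card {p : ℕ × ℕ // p.1 ∈ A ∧ p.2 ∈ A ∧ p.1 ≤ p.2 ∧ p.1 * p.2 = n})
    (n₀ : ℕ) (hpos : ∀ n : ℕ, n > n₀ → 1 ≤ g n) :
    ∀ m : ℕ, ∃ᶠ n : ℕ in atTop, m ≤ g n := by
  classical
  intro m
  set P : Set ℕ := {p | Nat.Prime p ∧ n₀ < p} with hPdef
  have hPinf : P.Infinite := by
    have h1 : {p : ℕ | Nat.Prime p}.Infinite := Nat.infinite_setOf_prime
    have h2 := h1.diff (Set.finite_Iic n₀)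
    apply h2.mono
    rintro p ⟨hp1, hp2⟩
    exact ⟨hp1, by simpa using hp2⟩
  have hrep : ∀ n, n₀ < n → ∃ a b : ℕ, a ∈ A ∧ b ∈ A ∧ a * b = n := by
    intro n hn
    have h1 := hpos n hn
    rw [hg n] at h1
    have hne : Nonempty {p : ℕ × ℕ // p.1 ∈ A ∧ p.2 ∈ A ∧ p.1 ≤ p.2 ∧ p.1 * p.2 = n} := by
      by_contra h
      rw [not_nonempty_iff] at h
      rw [Nat.card_of_isEmpty] at h1
      omega
    obtain ⟨⟨⟨a, b⟩, ha, hb, _, hab⟩⟩ := hne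
    exact ⟨a, b, ha, hb, hab⟩
  have hprimes : ∀ s : Finset ℕ, ↑s ⊆ P → ∀ p ∈ s, Nat.Prime p := fun s hs p hp => (hs hp).1
  have hsplit : ∀ s : Finset ℕ, ↑s ⊆ P → s.Nonempty →
      ∃ t, t ⊆ s ∧ (∏ p ∈ t, p) ∈ A ∧ (∏ p ∈ s \ t, p) ∈ A := by
    intro s hsP hne
    obtain ⟨p₀, hp₀⟩ := hne
    have hgt : n₀ < ∏ p ∈ s, p := by
      have h1 : p₀ ≤ ∏ p ∈ s, p :=
        Finset.single_le_prod' (fun q hq => (hprimes s hsP q hq).one_lt.le.trans' (by omega)) hp₀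
      have h2 : n₀ < p₀ := (hsP hp₀).2
      omega
    obtain ⟨a, b, ha, hb, hab⟩ := hrep _ hgt
    obtain ⟨t, hts, hat, hbt⟩ := split_of_prod s (hprimes s hsP) a b hab
    exact ⟨t, hts, hat ▸ ha, hbt ▸ hb⟩
  -- main claim
  have claim : ∀ t : ℕ, ∃ k : ℕ, ∃ R : Set ℕ, t + 1 ≤ k ∧ R ⊆ P ∧ R.Infinite ∧
      ∀ s : Finset ℕ, ↑s ⊆ R → s.card = k → (∏ p ∈ s, p) ∈ A := by
    intro t
    induction t with
    | zero =>
      refine ⟨1, P, le_rfl, subset_rfl, hPinf, ?_⟩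
      intro s hs hcard
      obtain ⟨p, rfl⟩ := Finset.card_eq_one.mp hcard
      rw [Finset.prod_singleton]
      have hsub : ↑({p} : Finset ℕ) ⊆ P := hs
      obtain ⟨u, hu, hA1, hA2⟩ := hsplit {p} hsub ⟨p, Finset.mem_singleton_self p⟩
      rcases Finset.subset_singleton_iff.mp hu with rfl | rfl
      · simpa using hA2
      · simpa using hA1
    | succ t iht =>
      obtain ⟨k, R, hk, hRP, hRinf, hH⟩ := iht
      suffices h : ∃ k' : ℕ, ∃ R' : Set ℕ, k + 1 ≤ k' ∧ R' ⊆ R ∧ R'.Infinite ∧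
          (∀ s : Finset ℕ, ↑s ⊆ R' → s.card = k' → (∏ p ∈ s, p) ∈ A) by
        obtain ⟨k', R', hk', hR'R, hinf, hmono⟩ := h
        exact ⟨k', R', by omega, hR'R.trans hRP, hinf, hmono⟩
      have inner : ∀ i : ℕ, i ≤ k + 1 →
          (∃ k' : ℕ, ∃ R' : Set ℕ, k + 1 ≤ k' ∧ R' ⊆ R ∧ R'.Infinite ∧
            (∀ s : Finset ℕ, ↑s ⊆ R' → s.card = k' → (∏ p ∈ s, p) ∈ A)) ∨
          (∃ R' : Set ℕ, R' ⊆ R ∧ R'.Infinite ∧ ∀ j, 2*k+1-i < j → j ≤ 2*k+1 →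
            ∀ s : Finset ℕ, ↑s ⊆ R' → s.card = j → (∏ p ∈ s, p) ∉ A) := by
        intro i
        induction i with
        | zero =>
          intro _
          right
          exact ⟨R, subset_rfl, hRinf, fun j h1 h2 => by omega⟩
        | succ i ihi =>
          intro hik
          rcases ihi (by omega) with hdone | ⟨R', hR'R, hR'inf, hnone⟩
          · exact Or.inl hdone
          · obtain ⟨R'', hR''sub, hR''inf, c, hc⟩ :=
              inf_ramsey (2*k+1-i) (fun s => (∏ p ∈ s, p) ∈ A) R' hR'inf
            cases c with
            | true =>
              left
              refine ⟨2*k+1-i, R'', by omega, hR''sub.trans hR'R, hR''inf, ?_⟩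
              intro s hs hcard
              exact (hc s hs hcard).mpr rfl
            | false =>
              right
              refine ⟨R'', hR''sub.trans hR'R, hR''inf, ?_⟩
              intro j h1 h2 s hs hcard
              by_cases hj : j = 2*k+1-i
              · subst hj
                intro hmem
                have := (hc s hs hcard).mp hmem
                simp at this
              · exact hnone j (by omega) h2 s (fun x hx => hR''sub (hs hx)) hcard
      rcases inner (k+1) le_rfl with hdone | ⟨R', hR'R, hR'inf, hnone⟩
      · exact hdone
      · exfalso
        obtain ⟨s, hsR', hscard⟩ := hR'inf.exists_subset_card_eq (2*k+1)
        have hsP : ↑s ⊆ P := fun x hx => hRP (hR'R (hsR' hx))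
        have hne : s.Nonempty := Finset.card_pos.mp (by omega)
        obtain ⟨u, hus, hA1, hA2⟩ := hsplit s hsP hne
        have hcards : u.card + (s \ u).card = 2*k+1 := by
          rw [Finset.card_sdiff_of_subset hus]
          have := Finset.card_le_card hus
          omega
        by_cases hbig : k+1 ≤ u.card
        · exact hnone u.card (by omega) (by omega) u (fun x hx => hsR' (hus hx)) rfl hA1
        · exact hnone (s \ u).card (by omega) (by omega) (s \ u)
            (fun x hx => hsR' (Finset.sdiff_subset hx)) rfl hA2
  -- conclusion
  obtain ⟨k, R, hk, hRP, hRinf, hH⟩ := claim (m + 1)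
  rw [Filter.frequently_atTop]
  intro N
  have hinf2 : (R \ Set.Iic N).Infinite := hRinf.diff (Set.finite_Iic N)
  obtain ⟨s, hsR, hscard⟩ := hinf2.exists_subset_card_eq (2*k)
  have hsR' : ↑s ⊆ R := fun x hx => (hsR hx).1
  have hsP : ↑s ⊆ P := fun x hx => hRP (hsR' hx)
  have hk2 : 2 ≤ k := by omega
  have hne : s.Nonempty := Finset.card_pos.mp (by omega)
  obtain ⟨p₀, hp₀⟩ := hne
  set n := ∏ p ∈ s, p with hn
  have hone : ∀ q ∈ s, 1 ≤ q := fun q hq => (hsP hq).1.pos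
  have hp₀n : p₀ ≤ n := Finset.single_le_prod' hone hp₀
  have hNp₀ : N < p₀ := by
    have := (hsR hp₀).2
    simpa using this
  refine ⟨n, by omega, ?_⟩
  rw [hg n]
  have hmemA : ∀ t : Finset ℕ, t ⊆ s → t.card = k → (∏ p ∈ t, p) ∈ A :=
    fun t hts htc => hH t (fun x hx => hsR' (hts hx)) htc
  -- finiteness of the representation type
  haveI hfin : Finite {p : ℕ × ℕ // p.1 ∈ A ∧ p.2 ∈ A ∧ p.1 ≤ p.2 ∧ p.1 * p.2 = n} := by
    have hbound : ∀ x : {p : ℕ × ℕ // p.1 ∈ A ∧ p.2 ∈ A ∧ p.1 ≤ p.2 ∧ p.1 * p.2 = n},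
        x.val.1 ≤ n ∧ x.val.2 ≤ n := by
      rintro ⟨⟨a, b⟩, ha, hb, hab, habn⟩
      have hb1 : 0 < b := hA b hb
      have ha1 : 0 < a := hA a ha
      constructor
      · calc a ≤ a * b := Nat.le_mul_of_pos_right a hb1
          _ = n := habn
      · calc b ≤ a * b := Nat.le_mul_of_pos_left b ha1
          _ = n := habn
    haveI : Finite (Set.Iic n) := (Set.finite_Iic n).to_subtype
    apply Finite.of_injective
      (fun x : {p : ℕ × ℕ // p.1 ∈ A ∧ p.2 ∈ A ∧ p.1 ≤ p.2 ∧ p.1 * p.2 = n} =>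
        ((⟨x.val.1, (hbound x).1⟩ : Set.Iic n), (⟨x.val.2, (hbound x).2⟩ : Set.Iic n)))
    rintro ⟨⟨a, b⟩, _⟩ ⟨⟨a', b'⟩, _⟩ h
    simp only [Prod.mk.injEq, Subtype.mk.injEq] at h
    exact Subtype.ext (Prod.ext (congrArg Subtype.val h.1) (congrArg Subtype.val h.2))
  -- the injection from (k-1)-subsets of s.erase p₀
  set D := (s.erase p₀).powersetCard (k-1) with hD
  have hDfact : ∀ u ∈ D, p₀ ∉ u ∧ insert p₀ u ⊆ s ∧ (insert p₀ u).card = k ∧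
      (s \ insert p₀ u).card = k := by
    intro u hu
    obtain ⟨hu1, hu2⟩ := Finset.mem_powersetCard.mp hu
    have hp₀u : p₀ ∉ u := fun h => (Finset.mem_erase.mp (hu1 h)).1 rfl
    have hsub : insert p₀ u ⊆ s :=
      Finset.insert_subset hp₀ (hu1.trans (Finset.erase_subset p₀ s))
    have hcard : (insert p₀ u).card = k := by
      rw [Finset.card_insert_of_notMem hp₀u, hu2]
      omega
    refine ⟨hp₀u, hsub, hcard, ?_⟩
    rw [Finset.card_sdiff_of_subset hsub, hcard, hscard]
    omega
  have hprodn : ∀ u ∈ D, (∏ p ∈ s \ insert p₀ u, p) * (∏ p ∈ insert p₀ u, p) = n :=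
    fun u hu => Finset.prod_sdiff (hDfact u hu).2.1
  -- define the injection
  have hcardle : Nat.card {u // u ∈ D} ≤
      Nat.card {p : ℕ × ℕ // p.1 ∈ A ∧ p.2 ∈ A ∧ p.1 ≤ p.2 ∧ p.1 * p.2 = n} := by
    apply Nat.card_le_card_of_injective
      (fun u : {u // u ∈ D} =>
        (⟨if (∏ p ∈ insert p₀ u.1, p) ≤ (∏ p ∈ s \ insert p₀ u.1, p)
          then ((∏ p ∈ insert p₀ u.1, p), (∏ p ∈ s \ insert p₀ u.1, p))
          else ((∏ p ∈ s \ insert p₀ u.1, p), (∏ p ∈ insert p₀ u.1, p)),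
          by
            obtain ⟨hp₀u, hsub, hcard, hcard'⟩ := hDfact u.1 u.2
            have h1 : (∏ p ∈ insert p₀ u.1, p) ∈ A := hmemA _ hsub hcard
            have h2 : (∏ p ∈ s \ insert p₀ u.1, p) ∈ A :=
              hmemA _ Finset.sdiff_subset hcard'
            have h3 := hprodn u.1 u.2
            split_ifs with hle
            · exact ⟨h1, h2, hle, by rw [mul_comm] at h3; exact h3⟩
            · exact ⟨h2, h1, by omega, h3⟩⟩ :
          {p : ℕ × ℕ // p.1 ∈ A ∧ p.2 ∈ A ∧ p.1 ≤ p.2 ∧ p.1 * p.2 = n}))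
    rintro ⟨u, hu⟩ ⟨v, hv⟩ huv
    simp only [Subtype.mk.injEq] at huv
    have hprime1 : ∀ w ∈ D, ∀ p ∈ insert p₀ w, Nat.Prime p := by
      intro w hw p hp
      exact (hsP ((hDfact w hw).2.1 hp)).1
    have hprime2 : ∀ w : Finset ℕ, ∀ p ∈ s \ w, Nat.Prime p := by
      intro w p hp
      exact (hsP (Finset.sdiff_subset hp)).1
    have hcross : ¬ (∏ p ∈ insert p₀ u, p) = (∏ p ∈ s \ insert p₀ v, p) := by
      intro hceq
      have := prod_primes_injective (hprime1 u hu) (hprime2 (insert p₀ v)) hceq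
      have hmem : p₀ ∈ s \ insert p₀ v := this ▸ Finset.mem_insert_self p₀ u
      exact (Finset.mem_sdiff.mp hmem).2 (Finset.mem_insert_self p₀ v)
    have hcross' : ¬ (∏ p ∈ s \ insert p₀ u, p) = (∏ p ∈ insert p₀ v, p) := by
      intro hceq
      have := prod_primes_injective (hprime2 (insert p₀ u)) (hprime1 v hv) hceq
      have hmem : p₀ ∈ s \ insert p₀ u := this.symm ▸ Finset.mem_insert_self p₀ v
      exact (Finset.mem_sdiff.mp hmem).2 (Finset.mem_insert_self p₀ u)
    have hmain : (∏ p ∈ insert p₀ u, p) = (∏ p ∈ insert p₀ v, p) := by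
      split_ifs at huv with h1 h2 h2 <;>
        simp only [Prod.mk.injEq] at huv
      · exact huv.1
      · exact absurd huv.1 hcross
      · exact absurd huv.2 hcross
      · exact huv.2
    have heq : insert p₀ u = insert p₀ v :=
      prod_primes_injective (hprime1 u hu) (hprime1 v hv) hmain
    have hp₀u : p₀ ∉ u := (hDfact u hu).1
    have hp₀v : p₀ ∉ v := (hDfact v hv).1
    apply Subtype.ext
    have := congrArg (fun w => Finset.erase w p₀) heq
    simpa [Finset.erase_insert hp₀u, Finset.erase_insert hp₀v] using this
  have hDcard : Nat.card {u // u ∈ D} = Nat.choose (2*k-1) (k-1) := by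
    rw [Nat.card_eq_fintype_card, Fintype.card_coe, hD, Finset.card_powersetCard,
      Finset.card_erase_of_mem hp₀, hscard]
  have hchoose : m ≤ Nat.choose (2*k-1) (k-1) := by
    have h1 : (2*k-1 : ℕ) ≤ Nat.choose (2*k-1) (k-1) :=
      le_choose_of_le_half (by omega) (by omega)
    omega
  omega
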